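/- Let K ≥ 1 and 1/2 < p₂ ≤ p₁ be real numbers, let V̄ : (0,∞) → ℝ be a measurable locally bounded function with y^(2p₂) ≤ exp(2·V̄(y)) ≤ y^(2p₁) for all y ≥ K, and let n ≥ 1 be an integer with 2(n−1)(1+p₁−p₂) − 2p₂ < −1. Suppose w : [K,∞) → [0,∞) is measurable and satisfies w(y) ≤ C·y^(2(n−1)(1+p₁−p₂)) for all y ≥ K with some constant C > 0. Then for every ξ ≥ K the quantity 2n·∫_K^ξ exp(2·V̄(y₁)) · ( ∫_{y₁}^∞ w(y₂)·exp(−2·V̄(y₂)) dy₂ ) dy₁ is finite and bounded above by C'·ξ^(2n(1+p₁−p₂)) for some constant C' depending only on n, p₁, p₂, C. -/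

import Mathlib

open MeasureTheory

private lemma neg_div_aux (c x b : ℝ) (hb : b ≠ 0) : c * (-x / b) = c / -b * x := by
  field_simp

/-- induction step: Under `y^(2p₂) ≤ exp(2·V̄(y)) ≤ y^(2p₁)`
for `y ≥ K` (with `K ≥ 1`, `1/2 < p₂ ≤ p₁`), let `n ≥ 1` be an integer with
`2(n−1)(1+p₁−p₂) − 2p₂ < −1`, and let `w ≥ 0` be measurable with
`w(y) ≤ C·y^(2(n−1)(1+p₁−p₂))` for `y ≥ K`.  Then for every `ξ ≥ K` the
quantity `2n·∫_K^ξ e^{2V̄(y₁)} (∫_{y₁}^∞ w(y₂) e^{−2V̄(y₂)} dy₂) dy₁` is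
finite (all integrals involved converge) and bounded above by
`C'·ξ^(2n(1+p₁−p₂))` for some `C'` depending only on `n, p₁, p₂, C`. -/
theorem moment_induction_step
    (K p₁ p₂ : ℝ) (hK : 1 ≤ K) (hp₂ : 1 / 2 < p₂) (hp : p₂ ≤ p₁)
    (Vbar : ℝ → ℝ) (hmeas : Measurable Vbar)
    (hloc : ∀ a b : ℝ, 0 < a → ∃ M : ℝ, ∀ y ∈ Set.Icc a b, |Vbar y| ≤ M)
    (hlb : ∀ y : ℝ, K ≤ y → y ^ (2 * p₂) ≤ Real.exp (2 * Vbar y))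
    (hub : ∀ y : ℝ, K ≤ y → Real.exp (2 * Vbar y) ≤ y ^ (2 * p₁))
    (n : ℕ) (hn : 1 ≤ n)
    (hconv : 2 * ((n : ℝ) - 1) * (1 + p₁ - p₂) - 2 * p₂ < -1)
    (w : ℝ → ℝ) (hwmeas : Measurable w)
    (hwnonneg : ∀ y : ℝ, K ≤ y → 0 ≤ w y)
    (C : ℝ) (hC : 0 < C)
    (hw : ∀ y : ℝ, K ≤ y → w y ≤ C * y ^ (2 * ((n : ℝ) - 1) * (1 + p₁ - p₂))) :
    (∀ ξ : ℝ, K ≤ ξ →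
      (∀ y₁ : ℝ, K ≤ y₁ →
          IntegrableOn (fun y₂ => w y₂ * Real.exp (-(2 * Vbar y₂)))
            (Set.Ioi y₁)) ∧
        IntervalIntegrable
          (fun y₁ => Real.exp (2 * Vbar y₁) *
            ∫ y₂ in Set.Ioi y₁, w y₂ * Real.exp (-(2 * Vbar y₂)))
          volume K ξ) ∧
      ∃ C' : ℝ, ∀ ξ : ℝ, K ≤ ξ →
        2 * (n : ℝ) * ∫ y₁ in K..ξ, Real.exp (2 * Vbar y₁) *
            ∫ y₂ in Set.Ioi y₁, w y₂ * Real.exp (-(2 * Vbar y₂)) ≤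
          C' * ξ ^ (2 * (n : ℝ) * (1 + p₁ - p₂)) := by
  have hK0 : (0:ℝ) < K := lt_of_lt_of_le one_pos hK
  set q : ℝ := 2 * ((n : ℝ) - 1) * (1 + p₁ - p₂) with hq
  set a : ℝ := q - 2 * p₂ with ha_def
  have ha : a < -1 := hconv
  clear_value q a
  have h1n : (1:ℝ) ≤ (n:ℝ) := by exact_mod_cast hn
  have hq0 : 0 ≤ q := by
    rw [hq]
    apply mul_nonneg <;> linarith
  set f : ℝ → ℝ := fun y₂ => w y₂ * Real.exp (-(2 * Vbar y₂)) with hf_def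
  have hfmeas : Measurable f := hwmeas.mul ((measurable_const.mul hmeas).neg.exp)
  -- pointwise bound on f for y ≥ K
  have hfb : ∀ y : ℝ, K ≤ y → f y ≤ C * y ^ a := by
    intro y hy
    have hy0 : (0:ℝ) < y := lt_of_lt_of_le hK0 hy
    have h1 : Real.exp (-(2 * Vbar y)) ≤ y ^ (-(2 * p₂)) := by
      rw [Real.exp_neg, Real.rpow_neg hy0.le]
      exact inv_anti₀ (Real.rpow_pos_of_pos hy0 _) (hlb y hy)
    calc f y ≤ (C * y ^ q) * (y ^ (-(2 * p₂))) := by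
          apply mul_le_mul (hw y hy) h1 (Real.exp_nonneg _)
          exact mul_nonneg hC.le (Real.rpow_nonneg hy0.le _)
      _ = C * y ^ a := by
          rw [mul_assoc, ← Real.rpow_add hy0]
          have hqa : q + -(2 * p₂) = a := by rw [ha_def]; ring
          rw [hqa]
  have hfnonneg : ∀ y : ℝ, K ≤ y → 0 ≤ f y :=
    fun y hy => mul_nonneg (hwnonneg y hy) (Real.exp_nonneg _)
  -- dominating function integrable
  have hdom : ∀ c : ℝ, K ≤ c → IntegrableOn (fun x : ℝ => C * x ^ a) (Set.Ioi c) :=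
    fun c hc => (integrableOn_Ioi_rpow_of_lt ha (lt_of_lt_of_le hK0 hc)).const_mul C
  -- inner integrability
  have hint : ∀ y₁ : ℝ, K ≤ y₁ → IntegrableOn f (Set.Ioi y₁) := by
    intro y₁ hy₁
    refine Integrable.mono' (hdom y₁ hy₁) hfmeas.aestronglyMeasurable ?_
    rw [ae_restrict_iff' measurableSet_Ioi]
    filter_upwards with y hy
    have hy' : K ≤ y := le_of_lt (lt_of_le_of_lt hy₁ hy)
    rw [Real.norm_of_nonneg (hfnonneg y hy')]
    exact hfb y hy'
  -- inner integral nonneg and bound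
  have hGnonneg : ∀ y₁ : ℝ, K ≤ y₁ → 0 ≤ ∫ y₂ in Set.Ioi y₁, f y₂ := by
    intro y₁ hy₁
    refine setIntegral_nonneg measurableSet_Ioi fun y hy => ?_
    exact hfnonneg y (le_of_lt (lt_of_le_of_lt hy₁ hy))
  have hGbound : ∀ y₁ : ℝ, K ≤ y₁ →
      ∫ y₂ in Set.Ioi y₁, f y₂ ≤ (C / (-(a+1))) * y₁ ^ (a + 1) := by
    intro y₁ hy₁
    have hy₁0 : (0:ℝ) < y₁ := lt_of_lt_of_le hK0 hy₁
    calc ∫ y₂ in Set.Ioi y₁, f y₂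
        ≤ ∫ y₂ in Set.Ioi y₁, C * y₂ ^ a :=
          setIntegral_mono_on (hint y₁ hy₁) (hdom y₁ hy₁) measurableSet_Ioi
            (fun y hy => hfb y (le_of_lt (lt_of_le_of_lt hy₁ hy)))
      _ = C * ∫ y₂ in Set.Ioi y₁, y₂ ^ a := by rw [integral_const_mul]
      _ = C * (-y₁ ^ (a+1) / (a+1)) := by rw [integral_Ioi_rpow_of_lt ha hy₁0]
      _ = (C / (-(a+1))) * y₁ ^ (a + 1) :=
          neg_div_aux C _ (a+1) (by linarith)
  -- the auxiliary antitone extension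
  set G : ℝ → ℝ := fun y => ∫ y₂ in Set.Ioi (max y K), f y₂ with hG_def
  have hGanti : Antitone G := by
    intro s t hst
    refine setIntegral_mono_set (hint (max s K) (le_max_right _ _)) ?_ ?_
    · filter_upwards [ae_restrict_mem measurableSet_Ioi] with y hy
      simpa using hfnonneg y (le_of_lt (lt_of_le_of_lt (le_max_right s K) hy))
    · exact HasSubset.Subset.eventuallyLE (Set.Ioi_subset_Ioi (max_le_max hst le_rfl))
  have hGmeas : Measurable G := hGanti.measurable
  set F : ℝ → ℝ := fun y₁ => Real.exp (2 * Vbar y₁) * ∫ y₂ in Set.Ioi y₁, f y₂ with hF_def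
  -- outer integrability
  have hFint : ∀ ξ : ℝ, K ≤ ξ → IntegrableOn F (Set.Ioc K ξ) := by
    intro ξ hξ
    have hmble : Measurable (fun y => Real.exp (2 * Vbar y) * G y) :=
      ((measurable_const.mul hmeas).exp).mul hGmeas
    have key : IntegrableOn (fun y => Real.exp (2 * Vbar y) * G y) (Set.Ioc K ξ) := by
      refine Measure.integrableOn_of_bounded (M := ξ ^ (2 * p₁) * G K)
        (by simp [measure_Ioc_lt_top.ne]) hmble.aestronglyMeasurable ?_
      rw [ae_restrict_iff' measurableSet_Ioc]
      filter_upwards with y hy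
      have hyK : K ≤ y := le_of_lt hy.1
      have hy0 : (0:ℝ) ≤ y := le_of_lt (lt_of_lt_of_le hK0 hyK)
      have hGy0 : 0 ≤ G y := by
        rw [hG_def]
        simpa [max_eq_left hyK] using hGnonneg y hyK
      rw [Real.norm_of_nonneg (mul_nonneg (Real.exp_nonneg _) hGy0)]
      have h1 : Real.exp (2 * Vbar y) ≤ ξ ^ (2 * p₁) :=
        le_trans (hub y hyK) (Real.rpow_le_rpow hy0 hy.2 (by linarith))
      have h2 : G y ≤ G K := hGanti hyK
      exact mul_le_mul h1 h2 hGy0 (Real.rpow_nonneg (le_trans hK0.le hξ) _)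
    refine key.congr_fun (fun y hy => ?_) measurableSet_Ioc
    simp [hF_def, hG_def, max_eq_left (le_of_lt hy.1)]
  refine ⟨fun ξ hξ => ⟨fun y₁ hy₁ => hint y₁ hy₁, ?_⟩, ?_⟩
  · rw [intervalIntegrable_iff_integrableOn_Ioc_of_le hξ]
    exact hFint ξ hξ
  · -- the bound
    set D : ℝ := C / (-(a+1)) with hD_def
    have hD0 : 0 ≤ D := by
      apply div_nonneg hC.le; linarith
    refine ⟨2 * (n:ℝ) * D, fun ξ hξ => ?_⟩
    have hξ0 : (0:ℝ) < ξ := lt_of_lt_of_le hK0 hξ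
    have hs0 : 0 ≤ 2 * p₁ + (a + 1) := by
      rw [ha_def]
      linarith [hq0]
    have hstep : ∫ y₁ in K..ξ, F y₁ ≤ D * ξ ^ (2 * (n:ℝ) * (1 + p₁ - p₂)) := by
      rw [intervalIntegral.integral_of_le hξ]
      calc ∫ y₁ in Set.Ioc K ξ, F y₁
          ≤ ∫ _ in Set.Ioc K ξ, D * ξ ^ (2 * p₁ + (a + 1)) := by
            refine setIntegral_mono_on (hFint ξ hξ) (integrableOn_const measure_Ioc_lt_top.ne)
              measurableSet_Ioc (fun y hy => ?_)
            have hyK : K ≤ y := le_of_lt hy.1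
            have hy0 : (0:ℝ) < y := lt_of_lt_of_le hK0 hyK
            have h1 : Real.exp (2 * Vbar y) ≤ y ^ (2 * p₁) := hub y hyK
            have h2 : ∫ y₂ in Set.Ioi y, f y₂ ≤ D * y ^ (a + 1) := hGbound y hyK
            calc F y ≤ y ^ (2 * p₁) * (D * y ^ (a + 1)) :=
                  mul_le_mul h1 h2 (hGnonneg y hyK) (Real.rpow_nonneg hy0.le _)
              _ = D * y ^ (2 * p₁ + (a + 1)) := by
                  rw [Real.rpow_add hy0 (2 * p₁) (a + 1)]; ring
              _ ≤ D * ξ ^ (2 * p₁ + (a + 1)) := by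
                  exact mul_le_mul_of_nonneg_left (Real.rpow_le_rpow hy0.le hy.2 hs0) hD0
        _ = (ξ - K) * (D * ξ ^ (2 * p₁ + (a + 1))) := by
            rw [setIntegral_const, Real.volume_real_Ioc_of_le hξ, smul_eq_mul]
        _ ≤ ξ * (D * ξ ^ (2 * p₁ + (a + 1))) := by
            apply mul_le_mul_of_nonneg_right (by linarith)
            exact mul_nonneg hD0 (Real.rpow_nonneg hξ0.le _)
        _ = D * ξ ^ (2 * (n:ℝ) * (1 + p₁ - p₂)) := by
            have h3 : 2 * (n:ℝ) * (1 + p₁ - p₂) = 1 + (2 * p₁ + (a + 1)) := by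
              rw [ha_def, hq]; ring
            rw [h3, Real.rpow_add hξ0 1 (2 * p₁ + (a + 1)), Real.rpow_one]; ring
    calc 2 * (n:ℝ) * ∫ y₁ in K..ξ, F y₁
        ≤ 2 * (n:ℝ) * (D * ξ ^ (2 * (n:ℝ) * (1 + p₁ - p₂))) := by
          apply mul_le_mul_of_nonneg_left hstep (by positivity)
      _ = 2 * (n:ℝ) * D * ξ ^ (2 * (n:ℝ) * (1 + p₁ - p₂)) := by ring
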